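/- If d is a positive integer and β is a real number with d ≤ β (and d/β < 1), then the sum over i from 1 to ⌊d/2⌋ of S_2(d,i)·β^(i-d+1) is at most β · (d/β)^⌈d/2⌉ / (1 - d/β). -/

import Mathlib

/-- `S2 d i` is the number of partitions of a `d`-element set into exactly `i`
blocks, each of size at least `2`. -/
def S2 (d i : ℕ) : ℕ :=
  (Finset.univ.filter fun P : Finset (Finset (Fin d)) =>
    P.card = i ∧ (∀ p ∈ P, 2 ≤ p.card) ∧
      ∀ v : Fin d, (P.filter fun p => v ∈ p).card = 1).card

namespace S2Aux
open Finset

variable {d : ℕ} (P : Finset (Finset (Fin d)))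

def blk (v : Fin d) : Finset (Fin d) := (P.filter fun p => v ∈ p).sup id

noncomputable def mf (v : Fin d) : Fin d :=
  if h : (blk P v).Nonempty then (blk P v).min' h else v

noncomputable def enc (v0 : Fin d) (j : ℕ) : Fin d :=
  mf P (((Finset.univ.filter fun v : Fin d => ¬ mf P v = v).sort (· ≤ ·)).getD j v0)

variable (h1 : ∀ v : Fin d, (P.filter fun p => v ∈ p).card = 1)
variable (h2 : ∀ p ∈ P, 2 ≤ p.card)

section
include h1

lemma filter_eq (v : Fin d) : P.filter (fun p => v ∈ p) = {blk P v} := by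
  obtain ⟨p, hp⟩ := Finset.card_eq_one.mp (h1 v)
  rw [hp]; unfold blk; rw [hp, Finset.sup_singleton]; rfl

lemma blk_mem (v : Fin d) : blk P v ∈ P ∧ v ∈ blk P v := by
  have : blk P v ∈ P.filter (fun p => v ∈ p) := by
    rw [filter_eq P h1 v]; exact Finset.mem_singleton_self _
  simpa using this

lemma blk_eq {p : Finset (Fin d)} {v : Fin d} (hp : p ∈ P) (hv : v ∈ p) : p = blk P v := by
  have : p ∈ P.filter (fun q => v ∈ q) := by simp [hp, hv]
  rwa [filter_eq P h1 v, Finset.mem_singleton] at this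

lemma mem_blk_self (v : Fin d) : v ∈ blk P v := (blk_mem P h1 v).2

lemma blk_of_mem {v w : Fin d} (hw : w ∈ blk P v) : blk P w = blk P v :=
  (blk_eq P h1 (blk_mem P h1 v).1 hw).symm

lemma mf_eq (v : Fin d) : mf P v = (blk P v).min' ⟨v, mem_blk_self P h1 v⟩ := by
  rw [mf, dif_pos ⟨v, mem_blk_self P h1 v⟩]

lemma mf_mem (v : Fin d) : mf P v ∈ blk P v := by
  rw [mf_eq P h1]; exact Finset.min'_mem _ _

lemma mf_congr {v w : Fin d} (h : blk P v = blk P w) : mf P v = mf P w := by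
  rw [mf_eq P h1, mf_eq P h1]; congr 1

lemma mf_eq_of_mem {v w : Fin d} (hw : w ∈ blk P v) : mf P w = mf P v :=
  mf_congr P h1 (blk_of_mem P h1 hw)

lemma mf_idem (v : Fin d) : mf P (mf P v) = mf P v :=
  mf_eq_of_mem P h1 (mf_mem P h1 v)

lemma fiber_eq_blk (v : Fin d) :
    (Finset.univ.filter fun w => mf P w = mf P v) = blk P v := by
  ext w
  simp only [Finset.mem_filter, Finset.mem_univ, true_and]
  constructor
  · intro h
    have hw : blk P (mf P w) = blk P w := blk_of_mem P h1 (mf_mem P h1 w)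
    have hv : blk P (mf P v) = blk P v := blk_of_mem P h1 (mf_mem P h1 v)
    have : blk P w = blk P v := by rw [← hw, h, hv]
    rw [← this]; exact mem_blk_self P h1 w
  · exact fun hw => mf_eq_of_mem P h1 hw

end

include h1 h2

lemma P_eq_image :
    P = Finset.univ.image (fun v => Finset.univ.filter fun w => mf P w = mf P v) := by
  ext p
  simp only [Finset.mem_image, Finset.mem_univ, true_and, fiber_eq_blk P h1]
  constructor
  · intro hp
    obtain ⟨v, hv⟩ := Finset.card_pos.mp (lt_of_lt_of_le one_pos (le_trans one_le_two (h2 p hp)))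
    exact ⟨v, (blk_eq P h1 hp hv).symm⟩
  · rintro ⟨v, rfl⟩; exact (blk_mem P h1 v).1

lemma card_fixed {i : ℕ} (hcard : P.card = i) :
    (Finset.univ.filter fun v : Fin d => mf P v = v).card = i := by
  rw [← hcard]
  apply Finset.card_bij (fun v _ => blk P v)
  · intro v hv; exact (blk_mem P h1 v).1
  · intro v hv w hw h
    simp only [Finset.mem_filter] at hv hw
    rw [← hv.2, ← hw.2]
    exact mf_congr P h1 h
  · intro p hp
    have hne : p.Nonempty :=
      Finset.card_pos.mp (lt_of_lt_of_le one_pos (le_trans one_le_two (h2 p hp)))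
    obtain ⟨v, hv⟩ := hne
    refine ⟨mf P v, ?_, ?_⟩
    · simp [mf_idem P h1 v]
    · rw [blk_of_mem P h1 (mf_mem P h1 v)]
      exact (blk_eq P h1 hp hv).symm

lemma card_nonfixed {i : ℕ} (hcard : P.card = i) (hi : i ≤ d) :
    (Finset.univ.filter fun v : Fin d => ¬ mf P v = v).card = d - i := by
  have h := Finset.card_filter_add_card_filter_not
    (s := (Finset.univ : Finset (Fin d))) (p := fun v => mf P v = v)
  rw [card_fixed P h1 h2 hcard, Finset.card_univ, Fintype.card_fin] at h
  omega

lemma enc_image {i : ℕ} (hcard : P.card = i) (hi : i ≤ d) (v0 : Fin d) (m : Fin d) :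
    mf P m = m ↔ ∃ j < d - i, enc P v0 j = m := by
  set L := ((Finset.univ.filter fun v : Fin d => ¬ mf P v = v).sort (· ≤ ·)) with hL
  have hlen : L.length = d - i := by
    rw [hL, Finset.length_sort, card_nonfixed P h1 h2 hcard hi]
  constructor
  · intro hm
    have hblk : 2 ≤ (blk P m).card := h2 _ (blk_mem P h1 m).1
    obtain ⟨w, hw, hwm⟩ := Finset.exists_mem_ne (lt_of_lt_of_le one_lt_two hblk) m
    have hmfw : mf P w = m := by rw [mf_eq_of_mem P h1 hw, hm]
    have hwN : w ∈ L := by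
      rw [hL, Finset.mem_sort]
      simp only [Finset.mem_filter, Finset.mem_univ, true_and]
      rw [hmfw]; exact fun h => hwm h.symm
    obtain ⟨n, hn, hnw⟩ := List.mem_iff_getElem.mp hwN
    refine ⟨n, by omega, ?_⟩
    rw [enc, ← hL, List.getD_eq_getElem L v0 hn, hnw, hmfw]
  · rintro ⟨j, hj, rfl⟩
    exact mf_idem P h1 _

lemma determined {Q : Finset (Finset (Fin d))} {i : ℕ}
    (hq1 : ∀ v : Fin d, (Q.filter fun p => v ∈ p).card = 1)
    (hq2 : ∀ p ∈ Q, 2 ≤ p.card)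
    (hPc : P.card = i) (hQc : Q.card = i) (hi : i ≤ d) (v0 : Fin d)
    (henc : ∀ j < d - i, enc P v0 j = enc Q v0 j) : P = Q := by
  have hfix : ∀ m : Fin d, mf P m = m ↔ mf Q m = m := by
    intro m
    rw [enc_image P h1 h2 hPc hi v0 m, enc_image Q hq1 hq2 hQc hi v0 m]
    constructor
    · rintro ⟨j, hj, hje⟩; exact ⟨j, hj, by rw [← henc j hj, hje]⟩
    · rintro ⟨j, hj, hje⟩; exact ⟨j, hj, by rw [henc j hj, hje]⟩
  have hN : (Finset.univ.filter fun v : Fin d => ¬ mf P v = v)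
      = (Finset.univ.filter fun v : Fin d => ¬ mf Q v = v) := by
    ext v
    simp only [Finset.mem_filter, Finset.mem_univ, true_and]
    exact not_congr (hfix v)
  have hmf : ∀ v : Fin d, mf P v = mf Q v := by
    intro v
    by_cases hv : mf P v = v
    · rw [hv]; exact ((hfix v).mp hv).symm
    · set L := ((Finset.univ.filter fun v : Fin d => ¬ mf P v = v).sort (· ≤ ·)) with hL
      have hlen : L.length = d - i := by
        rw [hL, Finset.length_sort, card_nonfixed P h1 h2 hPc hi]
      have hvL : v ∈ L := by
        rw [hL, Finset.mem_sort]; simp [hv]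
      obtain ⟨n, hn, hnv⟩ := List.mem_iff_getElem.mp hvL
      have e1 : enc P v0 n = mf P v := by
        rw [enc, ← hL, List.getD_eq_getElem L v0 hn, hnv]
      have e2 : enc Q v0 n = mf Q v := by
        rw [enc, ← hN, ← hL, List.getD_eq_getElem L v0 hn, hnv]
      rw [← e1, ← e2, henc n (by omega)]
  rw [P_eq_image P h1 h2, P_eq_image Q hq1 hq2]
  congr 1
  funext v
  ext w
  simp [hmf]

end S2Aux

theorem S2_le_pow (d i : ℕ) (hd : 0 < d) (hi : i ≤ d) : S2 d i ≤ d ^ (d - i) := by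
  classical
  have key : S2 d i ≤ Fintype.card (Fin (d - i) → Fin d) := by
    rw [← Finset.card_univ]
    apply Finset.card_le_card_of_injOn
      (fun P (j : Fin (d - i)) => S2Aux.enc P ⟨0, hd⟩ (j : ℕ))
    · intro _ _; exact Finset.mem_univ _
    · intro P hP Q hQ hPQ
      simp only [Finset.coe_filter, Finset.mem_univ, true_and, Set.mem_setOf_eq] at hP hQ
      exact S2Aux.determined P hP.2.2 hP.2.1 hQ.2.2 hQ.2.1 hP.1 hQ.1 hi ⟨0, hd⟩
        (fun j hj => congrFun hPQ ⟨j, hj⟩)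
  calc S2 d i ≤ _ := key
    _ = d ^ (d - i) := by simp [Fintype.card_fun]


theorem stmt_4 (d : ℕ) (hd : 0 < d) (β : ℝ) (hβ : (d : ℝ) ≤ β)
    (hlt : (d : ℝ) / β < 1) :
    ∑ i ∈ Finset.Icc 1 (d / 2), (S2 d i : ℝ) * β ^ ((i : ℤ) - d + 1) ≤
      β * ((d : ℝ) / β) ^ ((d + 1) / 2) / (1 - (d : ℝ) / β) := by
  have hd1 : (1:ℝ) ≤ (d:ℝ) := by exact_mod_cast hd
  have hβ0 : (0:ℝ) < β := lt_of_lt_of_le (by linarith) hβ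
  have hβne : β ≠ 0 := ne_of_gt hβ0
  set x : ℝ := (d:ℝ) / β with hx
  have hx0 : 0 ≤ x := div_nonneg (by linarith) (le_of_lt hβ0)
  have hx1 : x < 1 := hlt
  set m := d / 2 with hm
  set c := (d + 1) / 2 with hc
  -- termwise bound
  have step1 : ∀ i ∈ Finset.Icc 1 m, (S2 d i : ℝ) * β ^ ((i : ℤ) - d + 1) ≤
      β * x ^ (d - i) := by
    intro i hi
    simp only [Finset.mem_Icc] at hi
    have hid : i ≤ d := le_trans hi.2 (by omega)
    have hS : (S2 d i : ℝ) ≤ (d:ℝ) ^ (d - i) := by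
      exact_mod_cast S2_le_pow d i hd hid
    have hzpos : (0:ℝ) < β ^ ((i : ℤ) - d + 1) := zpow_pos hβ0 _
    have key : (d:ℝ) ^ (d - i) * β ^ ((i : ℤ) - d + 1) = β * x ^ (d - i) := by
      have he : (i : ℤ) - d + 1 = 1 - ((d - i : ℕ) : ℤ) := by
        push_cast [hid]; ring
      rw [he, zpow_sub₀ hβne, zpow_one, zpow_natCast, hx, div_pow]
      field_simp
    calc (S2 d i : ℝ) * β ^ ((i : ℤ) - d + 1)
        ≤ (d:ℝ) ^ (d - i) * β ^ ((i : ℤ) - d + 1) :=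
          mul_le_mul_of_nonneg_right hS (le_of_lt hzpos)
      _ = β * x ^ (d - i) := key
  have step2 : ∑ i ∈ Finset.Icc 1 m, β * x ^ (d - i)
      = β * (x ^ c * ∑ j ∈ Finset.range m, x ^ j) := by
    rw [Finset.mul_sum, Finset.mul_sum]
    refine Finset.sum_nbij' (fun i => m - i) (fun j => m - j) ?_ ?_ ?_ ?_ ?_
    · intro i hi; simp only [Finset.mem_Icc] at hi; simp only [Finset.mem_range]; omega
    · intro j hj; simp only [Finset.mem_range] at hj; simp only [Finset.mem_Icc]; omega
    · intro i hi; simp only [Finset.mem_Icc] at hi; show m - (m - i) = i; omega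
    · intro j hj; simp only [Finset.mem_range] at hj; show m - (m - j) = j; omega
    · intro i hi
      simp only [Finset.mem_Icc] at hi
      show β * x ^ (d - i) = β * (x ^ c * x ^ (m - i))
      have : d - i = c + (m - i) := by omega
      rw [this, pow_add]
  have geom : ∑ j ∈ Finset.range m, x ^ j ≤ 1 / (1 - x) := by
    have h1x : (0:ℝ) < 1 - x := by linarith
    rw [le_div_iff₀ h1x]
    have hg := geom_sum_mul x m
    have hxm : (0:ℝ) ≤ x ^ m := pow_nonneg hx0 m
    have : (∑ j ∈ Finset.range m, x ^ j) * (1 - x) = 1 - x ^ m := by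
      linear_combination -hg
    linarith
  calc ∑ i ∈ Finset.Icc 1 m, (S2 d i : ℝ) * β ^ ((i : ℤ) - d + 1)
      ≤ ∑ i ∈ Finset.Icc 1 m, β * x ^ (d - i) := Finset.sum_le_sum step1
    _ = β * (x ^ c * ∑ j ∈ Finset.range m, x ^ j) := step2
    _ ≤ β * (x ^ c * (1 / (1 - x))) := by
        apply mul_le_mul_of_nonneg_left _ (le_of_lt hβ0)
        exact mul_le_mul_of_nonneg_left geom (pow_nonneg hx0 c)
    _ = β * x ^ c / (1 - x) := by ring
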